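/- For every n-qubit state ρ with ρ ≠ I/2^n (the maximally mixed state) and every real α ≥ 1/2 with α ≠ 1, the filtered magic witness is bounded by the filtered stabilizer norm: W̃_α(ρ) ≤ 2 ln D̃(ρ). -/

import Mathlib

open Matrix Complex BigOperators
open scoped ComplexOrder

noncomputable section

/-- Index type for `n` qubits: functions `Fin n → Fin 2` (cardinality `2^n`). -/
abbrev QIdx (n : ℕ) := Fin n → Fin 2

/-- The four single-qubit Pauli matrices: `σ⁰ = I`, `σ¹ = σˣ`, `σ² = σᶻ`, `σ³ = σʸ`. -/
def pauliMat : Fin 4 → Matrix (Fin 2) (Fin 2) ℂ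
  | 0 => 1
  | 1 => !![0, 1; 1, 0]
  | 2 => !![1, 0; 0, -1]
  | 3 => !![0, -Complex.I; Complex.I, 0]

/-- The Pauli string `σ^{a_1} ⊗ ⋯ ⊗ σ^{a_n}` as a `2^n × 2^n` matrix. -/
def pauliString {n : ℕ} (a : Fin n → Fin 4) : Matrix (QIdx n) (QIdx n) ℂ :=
  fun i j => ∏ k, pauliMat (a k) (i k) (j k)

/-- An `n`-qubit state: positive semidefinite with unit trace. -/
def IsState {n : ℕ} (ρ : Matrix (QIdx n) (QIdx n) ℂ) : Prop :=
  ρ.PosSemidef ∧ ρ.trace = 1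

/-- The `α`-moment of the Pauli spectrum `A_α(ρ) = 2^{-n} ∑_P |tr(ρP)|^{2α}`. -/
def Amom {n : ℕ} (α : ℝ) (ρ : Matrix (QIdx n) (QIdx n) ℂ) : ℝ :=
  ((2:ℝ)^n)⁻¹ * ∑ a : Fin n → Fin 4, (‖(ρ * pauliString a).trace‖) ^ (2 * α)

/-- The 2-Rényi entropy `S₂(ρ) = -ln tr(ρ²)`. -/
def S2 {n : ℕ} (ρ : Matrix (QIdx n) (QIdx n) ℂ) : ℝ :=
  - Real.log ((ρ * ρ).trace.re)

/-- The magic witness `W_α(ρ) = (1/(1-α)) ln A_α(ρ) - ((1-2α)/(1-α)) S₂(ρ)`. -/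
def Wit {n : ℕ} (α : ℝ) (ρ : Matrix (QIdx n) (QIdx n) ℂ) : ℝ :=
  (1 / (1 - α)) * Real.log (Amom α ρ) - ((1 - 2*α)/(1 - α)) * S2 ρ

/-- The stabilizer norm `D(ρ) = A_{1/2}(ρ) = 2^{-n} ∑_P |tr(ρP)|`. -/
def Dnorm {n : ℕ} (ρ : Matrix (QIdx n) (QIdx n) ℂ) : ℝ :=
  Amom (1/2) ρ

/-- A Clifford unitary: unitary mapping every Pauli string to `±` a Pauli string. -/
def IsCliffordUnitary {n : ℕ} (U : Matrix (QIdx n) (QIdx n) ℂ) : Prop :=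
  U ∈ Matrix.unitaryGroup (QIdx n) ℂ ∧
    ∀ a : Fin n → Fin 4, ∃ (b : Fin n → Fin 4) (ε : ℝ),
      (ε = 1 ∨ ε = -1) ∧ U * pauliString a * Uᴴ = (ε : ℂ) • pauliString b

/-- The computational all-zeros basis vector `|0⟩^{⊗n}`. -/
def zeroVec (n : ℕ) : QIdx n → ℂ :=
  fun i => if (∀ k, i k = 0) then 1 else 0

/-- A pure stabilizer state vector: `U|0⟩^{⊗n}` for a Clifford unitary `U`. -/
def IsPureStab {n : ℕ} (ψ : QIdx n → ℂ) : Prop :=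
  ∃ U, IsCliffordUnitary U ∧ ψ = U.mulVec (zeroVec n)

/-- The rank-one projector `|ψ⟩⟨ψ|`. -/
def proj {n : ℕ} (ψ : QIdx n → ℂ) : Matrix (QIdx n) (QIdx n) ℂ :=
  Matrix.vecMulVec ψ (star ψ)

/-- A mixed stabilizer state: a finite convex combination of pure stabilizer projectors. -/
def IsMixedStab {n : ℕ} (ρ : Matrix (QIdx n) (QIdx n) ℂ) : Prop :=
  ∃ (k : ℕ) (p : Fin k → ℝ) (ψ : Fin k → QIdx n → ℂ),
    (∀ i, 0 ≤ p i) ∧ (∑ i, p i = 1) ∧ (∀ i, IsPureStab (ψ i)) ∧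
    ρ = ∑ i, (p i : ℂ) • proj (ψ i)

/-- The set of values `ln ∑ᵢ |xᵢ|` over finite real stabilizer decompositions of `ρ`. -/
def StabDecomps {n : ℕ} (ρ : Matrix (QIdx n) (QIdx n) ℂ) : Set ℝ :=
  { r | ∃ (k : ℕ) (x : Fin k → ℝ) (ψ : Fin k → QIdx n → ℂ),
      (∀ i, IsPureStab (ψ i)) ∧ ρ = ∑ i, (x i : ℂ) • proj (ψ i) ∧
      r = Real.log (∑ i, |x i|) }

/-- The log-free robustness of magic. -/
def LR {n : ℕ} (ρ : Matrix (QIdx n) (QIdx n) ℂ) : ℝ := sInf (StabDecomps ρ)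

open Classical in
/-- Positive-semidefinite square root (junk value `0` off the PSD cone). -/
def psdSqrt {n : ℕ} (A : Matrix (QIdx n) (QIdx n) ℂ) : Matrix (QIdx n) (QIdx n) ℂ :=
  if h : A.PosSemidef then
    (h.1.eigenvectorUnitary : Matrix (QIdx n) (QIdx n) ℂ) *
      diagonal ((↑) ∘ (√·) ∘ h.1.eigenvalues) *
      (star (h.1.eigenvectorUnitary : Matrix (QIdx n) (QIdx n) ℂ))
  else 0

/-- The Uhlmann fidelity `F(ρ,σ) = (tr √(√ρ σ √ρ))²`. -/
def fidelity {n : ℕ} (ρ σ : Matrix (QIdx n) (QIdx n) ℂ) : ℝ :=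
  ((psdSqrt (psdSqrt ρ * σ * psdSqrt ρ)).trace.re) ^ 2

/-- The stabilizer fidelity `D_F(ρ) = inf { -ln F(ρ,σ) : σ a mixed stabilizer state }`. -/
def DF {n : ℕ} (ρ : Matrix (QIdx n) (QIdx n) ℂ) : ℝ :=
  sInf { r | ∃ σ, IsMixedStab σ ∧ r = - Real.log (fidelity ρ σ) }

/-- Filtered Pauli moment `Ã_α(ρ) = (2^n A_α(ρ) - 1)/(2^n - 1)`. -/
def Atil {n : ℕ} (α : ℝ) (ρ : Matrix (QIdx n) (QIdx n) ℂ) : ℝ :=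
  ((2:ℝ)^n * Amom α ρ - 1) / ((2:ℝ)^n - 1)

/-- Filtered stabilizer norm `D̃(ρ) = (2^n D(ρ) - 1)/(2^n - 1)`. -/
def Dtil {n : ℕ} (ρ : Matrix (QIdx n) (QIdx n) ℂ) : ℝ :=
  ((2:ℝ)^n * Dnorm ρ - 1) / ((2:ℝ)^n - 1)

/-- Filtered magic witness `W̃_α(ρ) = (1/(1-α)) ln Ã_α(ρ) + ((1-2α)/(1-α)) ln Ã₁(ρ)`. -/
def Wtil {n : ℕ} (α : ℝ) (ρ : Matrix (QIdx n) (QIdx n) ℂ) : ℝ :=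
  (1/(1-α)) * Real.log (Atil α ρ) + ((1 - 2*α)/(1-α)) * Real.log (Atil 1 ρ)

/-- The maximally mixed state `I/2^n`. -/
def maxMixed (n : ℕ) : Matrix (QIdx n) (QIdx n) ℂ := ((2:ℂ)^n)⁻¹ • 1

/-- The single-qubit T-state vector `|T⟩ = (|0⟩ + e^{-iπ/4}|1⟩)/√2`. -/
def Tket : QIdx 1 → ℂ :=
  fun i => if i 0 = 0 then (Real.sqrt 2 : ℂ)⁻¹
           else Complex.exp (-(Real.pi/4 : ℂ) * Complex.I) * (Real.sqrt 2 : ℂ)⁻¹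

/-- The depolarized T-state `ρ_p = (1-p)|T⟩⟨T| + p·I₂/2`. -/
def rhoDep (p : ℝ) : Matrix (QIdx 1) (QIdx 1) ℂ :=
  ((1 - p : ℝ) : ℂ) • proj Tket + ((p : ℝ) : ℂ) • (((2:ℂ))⁻¹ • 1)


lemma pauli_complete (x y z w : Fin 2) :
    ∑ b : Fin 4, pauliMat b x y * pauliMat b z w = if x = w ∧ y = z then 2 else 0 := by
  fin_cases x <;> fin_cases y <;> fin_cases z <;> fin_cases w <;>
    simp [Fin.sum_univ_four, pauliMat, Matrix.one_apply] <;> ring_nf <;>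
    simp [Complex.I_sq] <;> ring

lemma pauli_trace (b : Fin 4) :
    ∑ x : Fin 2, pauliMat b x x = if b = 0 then 2 else 0 := by
  fin_cases b <;> simp [Fin.sum_univ_two, pauliMat, Matrix.one_apply]

lemma pauliString_zero (n : ℕ) : pauliString (fun _ => (0:Fin 4)) = (1 : Matrix (QIdx n) (QIdx n) ℂ) := by
  ext i j
  simp only [pauliString, pauliMat, Matrix.one_apply]
  by_cases h : i = j
  · subst h; simp
  · have : ∃ k, i k ≠ j k := by
      by_contra hc; push_neg at hc; exact h (funext hc)
    obtain ⟨k, hk⟩ := this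
    rw [if_neg h]
    exact Finset.prod_eq_zero (Finset.mem_univ k) (by simp [Matrix.one_apply, hk])

lemma prod_ite_all {n : ℕ} (c : Fin n → Prop) [∀ k, Decidable (c k)] :
    (∏ k, (if c k then (2:ℂ) else 0)) = if (∀ k, c k) then (2:ℂ)^n else 0 := by
  by_cases h : ∀ k, c k
  · rw [if_pos h, Finset.prod_congr rfl (fun k _ => if_pos (h k)), Finset.prod_const]
    simp
  · push_neg at h; obtain ⟨k, hk⟩ := h
    rw [if_neg (by push_neg; exact ⟨k, hk⟩)]
    exact Finset.prod_eq_zero (Finset.mem_univ k) (if_neg hk)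

lemma pauli_sum_prod {n : ℕ} (v u i j : QIdx n) :
    ∑ a : Fin n → Fin 4, pauliString a v u * pauliString a i j
      = if v = j ∧ u = i then (2:ℂ)^n else 0 := by
  have h1 : ∀ a : Fin n → Fin 4, pauliString a v u * pauliString a i j
      = ∏ k, (pauliMat (a k) (v k) (u k) * pauliMat (a k) (i k) (j k)) := by
    intro a; rw [pauliString, pauliString, ← Finset.prod_mul_distrib]
  simp only [h1]
  rw [← Fintype.prod_sum (fun k b => pauliMat b (v k) (u k) * pauliMat b (i k) (j k))]
  have : ∀ k : Fin n, (∑ b : Fin 4, pauliMat b (v k) (u k) * pauliMat b (i k) (j k))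
      = if v k = j k ∧ u k = i k then (2:ℂ) else 0 := fun k => pauli_complete _ _ _ _
  rw [Finset.prod_congr rfl (fun k _ => this k), prod_ite_all]
  congr 1
  simp only [eq_iff_iff]
  constructor
  · intro h; exact ⟨funext fun k => (h k).1, funext fun k => (h k).2⟩
  · rintro ⟨h1, h2⟩ k; exact ⟨congrFun h1 k, congrFun h2 k⟩

lemma pauli_reconstruct {n : ℕ} (σ : Matrix (QIdx n) (QIdx n) ℂ)
    (h : ∀ a, (σ * pauliString a).trace = 0) : σ = 0 := by
  ext i j
  have h2 : ((2:ℂ)^n) ≠ 0 := pow_ne_zero _ two_ne_zero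
  have e0 : ∑ a : Fin n → Fin 4, (σ * pauliString a).trace * pauliString a i j = 0 := by
    simp [h]
  have e1 : ∑ a : Fin n → Fin 4, (σ * pauliString a).trace * pauliString a i j
      = ∑ u, ∑ v, σ u v * (∑ a : Fin n → Fin 4, pauliString a v u * pauliString a i j) := by
    simp only [Matrix.trace, Matrix.diag, Matrix.mul_apply, Finset.sum_mul, Finset.mul_sum]
    rw [Finset.sum_comm]
    refine Finset.sum_congr rfl fun u _ => ?_
    rw [Finset.sum_comm]
    exact Finset.sum_congr rfl fun v _ => Finset.sum_congr rfl fun a _ => by ring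
  have e2 : ∀ u, (∑ v, σ u v * if v = j ∧ u = i then (2:ℂ)^n else 0)
      = if u = i then σ u j * (2:ℂ)^n else 0 := by
    intro u
    by_cases hu : u = i <;> simp [hu, mul_ite, Finset.sum_ite_eq']
  have e3 : σ i j * (2:ℂ)^n = 0 := by
    rw [← e0, e1]
    simp only [pauli_sum_prod]
    rw [Finset.sum_congr rfl fun u _ => e2 u]
    simp
  rcases mul_eq_zero.mp e3 with h' | h'
  · simpa using h'
  · exact absurd h' h2


lemma trace_pauliString {n : ℕ} (a : Fin n → Fin 4) :
    (pauliString a).trace = if a = (fun _ => 0) then (2:ℂ)^n else 0 := by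
  simp only [Matrix.trace, Matrix.diag, pauliString]
  rw [show (∑ x : QIdx n, ∏ k, pauliMat (a k) (x k) (x k))
      = ∏ k, ∑ b : Fin 2, pauliMat (a k) b b from
    (Fintype.prod_sum (fun k b => pauliMat (a k) b b)).symm]
  rw [Finset.prod_congr rfl (fun k _ => pauli_trace (a k)),
    prod_ite_all (fun k => a k = 0)]
  congr 1
  simp only [eq_iff_iff, funext_iff]

lemma exists_nonzero_coeff {n : ℕ} (ρ : Matrix (QIdx n) (QIdx n) ℂ) (hρ : IsState ρ)
    (hne : ρ ≠ maxMixed n) :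
    ∃ a : Fin n → Fin 4, a ≠ (fun _ => 0) ∧ (ρ * pauliString a).trace ≠ 0 := by
  by_contra hc
  push_neg at hc
  apply hne
  have hz : ∀ a : Fin n → Fin 4, ((ρ - maxMixed n) * pauliString a).trace = 0 := by
    intro a
    rw [Matrix.sub_mul, Matrix.trace_sub]
    have hmm : (maxMixed n * pauliString a).trace
        = ((2:ℂ)^n)⁻¹ * (pauliString a).trace := by
      rw [maxMixed, Matrix.smul_mul, Matrix.one_mul, Matrix.trace_smul, smul_eq_mul]
    by_cases ha : a = (fun _ => 0)
    · subst ha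
      rw [pauliString_zero, Matrix.mul_one, Matrix.mul_one, hρ.2]
      have hmt : (maxMixed n).trace = 1 := by
        have hcard : (Fintype.card (QIdx n) : ℂ) = (2:ℂ)^n := by
          simp [Fintype.card_fun]
        simp only [maxMixed, Matrix.trace_smul, Matrix.trace_one, smul_eq_mul, hcard]
        exact inv_mul_cancel₀ (pow_ne_zero _ two_ne_zero)
      rw [hmt, sub_self]
    · rw [hc a ha, hmm, trace_pauliString, if_neg ha, mul_zero, sub_zero]
  have := pauli_reconstruct _ hz
  exact sub_eq_zero.mp this

lemma holder_pair {ι : Type*} (s : Finset ι) (u v : ι → ℝ)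
    (hu : ∀ i ∈ s, 0 ≤ u i) (hv : ∀ i ∈ s, 0 ≤ v i) (θ : ℝ) (h0 : 0 ≤ θ) (h1 : θ ≤ 1)
    (hA : 0 < ∑ i ∈ s, u i) (hB : 0 < ∑ i ∈ s, v i) :
    ∑ i ∈ s, (u i)^θ * (v i)^(1-θ) ≤ (∑ i ∈ s, u i)^θ * (∑ i ∈ s, v i)^(1-θ) := by
  set A := ∑ i ∈ s, u i with hAdef
  set B := ∑ i ∈ s, v i with hBdef
  have hABpos : 0 < A^θ * B^(1-θ) :=
    mul_pos (Real.rpow_pos_of_pos hA _) (Real.rpow_pos_of_pos hB _)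
  have key : ∀ i ∈ s, (u i)^θ * (v i)^(1-θ)
      ≤ (θ * (u i / A) + (1-θ) * (v i / B)) * (A^θ * B^(1-θ)) := by
    intro i hi
    have h := Real.geom_mean_le_arith_mean2_weighted (w₁ := θ) (w₂ := 1-θ)
      (p₁ := u i / A) (p₂ := v i / B) h0 (sub_nonneg.mpr h1)
      (div_nonneg (hu i hi) hA.le) (div_nonneg (hv i hi) hB.le) (by ring)
    have hrw : (u i / A)^θ * (v i / B)^(1-θ)
        = (u i)^θ * (v i)^(1-θ) / (A^θ * B^(1-θ)) := by
      rw [Real.div_rpow (hu i hi) hA.le, Real.div_rpow (hv i hi) hB.le]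
      ring
    rw [hrw, div_le_iff₀ hABpos] at h
    exact h
  calc ∑ i ∈ s, (u i)^θ * (v i)^(1-θ)
      ≤ ∑ i ∈ s, (θ * (u i / A) + (1-θ) * (v i / B)) * (A^θ * B^(1-θ)) :=
        Finset.sum_le_sum key
    _ = (θ * (A/A) + (1-θ) * (B/B)) * (A^θ * B^(1-θ)) := by
        rw [← Finset.sum_mul]
        congr 1
        rw [Finset.sum_add_distrib, ← Finset.mul_sum, ← Finset.mul_sum,
          ← Finset.sum_div, ← Finset.sum_div]
    _ = A^θ * B^(1-θ) := by
        rw [div_self hA.ne', div_self hB.ne']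
        ring


/-- for `ρ ≠ I/2^n` and `α ≥ 1/2`, `α ≠ 1`, the filtered witness
is bounded by twice the log of the filtered stabilizer norm:
`W̃_α(ρ) ≤ 2 ln D̃(ρ)`. -/
theorem filtered_witness_le_two_log_filtered_stabNorm {n : ℕ}
    (ρ : Matrix (QIdx n) (QIdx n) ℂ) (hρ : IsState ρ) (hne : ρ ≠ maxMixed n)
    (α : ℝ) (hα : (1:ℝ)/2 ≤ α) (hα1 : α ≠ 1) :
    Wtil α ρ ≤ 2 * Real.log (Dtil ρ) := by
  classical
  by_cases hn0 : n = 0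
  · exfalso; apply hne; subst hn0
    apply Matrix.ext; intro i j
    rw [Subsingleton.elim j i]
    have h1 : ρ i i = 1 := by
      have h := hρ.2
      rw [Matrix.trace,
        Fintype.sum_eq_single i (fun x hx => absurd (Subsingleton.elim x i) hx)] at h
      exact h
    simp [maxMixed, Matrix.one_apply, h1]
  have hn : 1 ≤ n := Nat.one_le_iff_ne_zero.mpr hn0
  set z : Fin n → Fin 4 := fun _ => 0 with hz
  set t : (Fin n → Fin 4) → ℝ := fun a => ‖(ρ * pauliString a).trace‖ with ht
  set s : Finset (Fin n → Fin 4) := Finset.univ.erase z with hs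
  obtain ⟨a₀, ha₀z, ha₀⟩ := exists_nonzero_coeff ρ hρ hne
  have ha₀s : a₀ ∈ s := Finset.mem_erase.mpr ⟨ha₀z, Finset.mem_univ _⟩
  have hta₀ : 0 < t a₀ := by simpa [ht] using (norm_pos_iff.mpr ha₀)
  have htz : t z = 1 := by
    simp [ht, hz, pauliString_zero, Matrix.mul_one, hρ.2]
  have htnn : ∀ a, 0 ≤ t a := fun a => norm_nonneg _
  set m : ℝ := (2:ℝ)^n - 1 with hm
  have hmpos : 0 < m := by
    have h1 : (2:ℝ)^1 ≤ (2:ℝ)^n := pow_le_pow_right₀ one_le_two hn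
    rw [hm]; norm_num at h1 ⊢; linarith
  set S : ℝ → ℝ := fun p => ∑ a ∈ s, t a ^ p with hS
  have hSpos : ∀ p : ℝ, 0 < S p := fun p =>
    lt_of_lt_of_le (Real.rpow_pos_of_pos hta₀ p)
      (Finset.single_le_sum (fun a _ => Real.rpow_nonneg (htnn a) p) ha₀s)
  have h2n : ((2:ℝ)^n) ≠ 0 := by positivity
  have hAtil : ∀ β : ℝ, Atil β ρ = S (2*β) / m := by
    intro β
    have e1 : (2:ℝ)^n * Amom β ρ = ∑ a : Fin n → Fin 4, t a ^ (2*β) := by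
      rw [Amom, ← mul_assoc, mul_inv_cancel₀ h2n, one_mul]
    have e2 : ∑ a : Fin n → Fin 4, t a ^ (2*β) = 1 + S (2*β) := by
      rw [← Finset.add_sum_erase _ _ (Finset.mem_univ z), htz, Real.one_rpow, ← hs, hS]
    rw [Atil, e1, e2, ← hm]
    ring_nf
  have hDtil : Dtil ρ = S 1 / m := by
    have e : Dtil ρ = Atil (1/2) ρ := rfl
    rw [e, hAtil]; norm_num
  have hA1 : Atil 1 ρ = S 2 / m := by rw [hAtil]; norm_num
  have hAa : Atil α ρ = S (2*α) / m := hAtil α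
  set L : ℝ → ℝ := fun p => Real.log (S p) with hL
  have hlog : ∀ p : ℝ, Real.log (S p / m) = L p - Real.log m := fun p =>
    Real.log_div (hSpos p).ne' hmpos.ne'
  have hW : Wtil α ρ = (1/(1-α)) * (L (2*α) - Real.log m)
      + ((1-2*α)/(1-α)) * (L 2 - Real.log m) := by
    rw [Wtil, hAa, hA1, hlog, hlog]
  have hD : 2 * Real.log (Dtil ρ) = 2 * (L 1 - Real.log m) := by rw [hDtil, hlog]
  rw [hW, hD]
  rcases eq_or_lt_of_le hα with heq | hlt
  · rw [← heq]; norm_num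
  · have h2α1 : 0 < 2*α - 1 := by linarith
    -- generic Hölder consequence
    have hlog3 : ∀ p q θ : ℝ, 0 ≤ θ → θ ≤ 1 → (θ*p + (1-θ)*q ≠ 0) →
        L (θ*p + (1-θ)*q) ≤ θ * L p + (1-θ) * L q := by
      intro p q θ hθ0 hθ1 hne0
      have hHo : S (θ*p + (1-θ)*q) ≤ S p ^ θ * S q ^ (1-θ) := by
        have hh := holder_pair s (fun a => t a ^ p) (fun a => t a ^ q)
          (fun a _ => Real.rpow_nonneg (htnn a) _) (fun a _ => Real.rpow_nonneg (htnn a) _)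
          θ hθ0 hθ1 (hSpos p) (hSpos q)
        have e : ∀ a ∈ s, t a ^ (θ*p + (1-θ)*q) = (t a ^ p)^θ * (t a ^ q)^(1-θ) := by
          intro a _
          rw [← Real.rpow_mul (htnn a), ← Real.rpow_mul (htnn a),
            ← Real.rpow_add' (htnn a) (by rw [mul_comm p θ, mul_comm q (1-θ)]; exact hne0)]
          ring_nf
        calc S (θ*p + (1-θ)*q) = ∑ a ∈ s, (t a ^ p)^θ * (t a ^ q)^(1-θ) :=
              Finset.sum_congr rfl e
          _ ≤ _ := hh
      have := Real.log_le_log (hSpos _) hHo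
      rwa [Real.log_mul (Real.rpow_pos_of_pos (hSpos p) _).ne'
        (Real.rpow_pos_of_pos (hSpos q) _).ne',
        Real.log_rpow (hSpos p), Real.log_rpow (hSpos q)] at this
    rcases lt_or_gt_of_ne hα1 with hlt1 | hgt1
    · -- 1/2 < α < 1
      have hc : 0 < 1 - α := by linarith
      set θ : ℝ := 2 - 2*α with hθ
      have hLb : L (2*α) ≤ θ * L 1 + (1-θ) * L 2 := by
        have := hlog3 1 2 θ (by rw [hθ]; linarith) (by rw [hθ]; linarith)
          (by rw [hθ]; intro hcon; nlinarith)
        have e : θ*1 + (1-θ)*2 = 2*α := by rw [hθ]; ring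
        rwa [e] at this
      have key : (1/(1-α)) * (θ * L 1 + (1-θ) * L 2 - Real.log m)
          + ((1-2*α)/(1-α)) * (L 2 - Real.log m) = 2 * (L 1 - Real.log m) := by
        rw [hθ]; field_simp; ring
      have hmul := mul_le_mul_of_nonneg_left
        (sub_le_sub_right hLb (Real.log m)) (by positivity : (0:ℝ) ≤ 1/(1-α))
      linarith
    · -- α > 1
      have hcneg : 1 - α < 0 := by linarith
      set lam : ℝ := (2*α-2)/(2*α-1) with hlam
      have hl0 : 0 ≤ lam := div_nonneg (by linarith) (by linarith)
      have hl1 : lam ≤ 1 := by rw [hlam, div_le_one h2α1]; linarith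
      have hLb : L 2 ≤ lam * L 1 + (1-lam) * L (2*α) := by
        have e : lam*1 + (1-lam)*(2*α) = 2 := by
          rw [hlam]; field_simp; ring
        have := hlog3 1 (2*α) lam hl0 hl1 (by rw [e]; norm_num)
        rwa [e] at this
      have hLb' : (2*α-1) * L 2 - (2*α-2) * L 1 ≤ L (2*α) := by
        have h1 := mul_le_mul_of_nonneg_left hLb h2α1.le
        have expand : (2*α-1) * (lam * L 1 + (1-lam) * L (2*α))
            = (2*α-2) * L 1 + L (2*α) := by
          rw [hlam]; field_simp; ring
        linarith
      have hcle : 1/(1-α) ≤ 0 := by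
        apply div_nonpos_of_nonneg_of_nonpos <;> linarith
      have hmul := mul_le_mul_of_nonpos_left
        (sub_le_sub_right hLb' (Real.log m)) hcle
      have key : (1/(1-α)) * ((2*α-1) * L 2 - (2*α-2) * L 1 - Real.log m)
          + ((1-2*α)/(1-α)) * (L 2 - Real.log m) = 2 * (L 1 - Real.log m) := by
        have hne1 : (1:ℝ) - α ≠ 0 := by intro h; rw [sub_eq_zero] at h; exact hα1 h.symm
        field_simp [hne1]; ring
      linarith

end
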